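/- arXiv:1712.04332 — 2 statements merged into one kernel-verified Lean document; each statement's English description precedes it below -/
import Mathlib

section
/- For every i, E[(g^i)^2] = (τ^2/n)(σ^2 + e) + (τ^2 (E[(a^1)^4] − 1)/n^2) (x^i − ξ^i)^2, where e = (1/n) Σ_j (x^j − ξ^j)^2 is the mean squared error of the current iterate. -/
open MeasureTheory ProbabilityTheory
open scoped ENNReal

lemma memLp_mul_aux {Ω : Type*} [MeasureSpace Ω] [IsProbabilityMeasure (ℙ : Measure Ω)]
    {f g : Ω → ℝ} (hf : ∀ p : ℕ, MemLp f p ℙ) (hg : ∀ p : ℕ, MemLp g p ℙ) :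
    ∀ p : ℕ, MemLp (fun ω => f ω * g ω) p ℙ := by
  intro p
  have hf2 : MemLp f (2 * p) ℙ := by
    have := hf (2 * p); rwa [Nat.cast_mul, Nat.cast_ofNat] at this
  have hg2 : MemLp g (2 * p) ℙ := by
    have := hg (2 * p); rwa [Nat.cast_mul, Nat.cast_ofNat] at this
  have h : MemLp (f • g) (p : ℝ≥0∞) ℙ := by
    haveI : ENNReal.HolderTriple (2 * (p : ℝ≥0∞)) (2 * (p : ℝ≥0∞)) (p : ℝ≥0∞) := ⟨by
      rw [← two_mul, ENNReal.mul_inv (by simp) (by simp), ← mul_assoc,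
        ENNReal.mul_inv_cancel (by norm_num) (by norm_num), one_mul]⟩
    refine hg2.smul hf2
  exact h

lemma memLp_pow_aux {Ω : Type*} [MeasureSpace Ω] [IsProbabilityMeasure (ℙ : Measure Ω)]
    {f : Ω → ℝ} (hf : ∀ p : ℕ, MemLp f p ℙ) (k : ℕ) :
    ∀ p : ℕ, MemLp (fun ω => f ω ^ k) p ℙ := by
  induction k with
  | zero => intro p; simpa using memLp_const (1 : ℝ)
  | succ k ih => intro p; simpa [pow_succ] using memLp_mul_aux ih hf p

/-- `E[(g^i)^2] = (τ^2/n)(σ^2 + e) + (τ^2 (E[(a^1)^4] − 1)/n^2) (x^i − ξ^i)^2`,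
where `e = (1/n) Σ_j (x^j − ξ^j)^2` is the mean squared error of the current iterate. -/
theorem online_regression_gradient_second_moment
    {Ω : Type*} [MeasureSpace Ω] [IsProbabilityMeasure (ℙ : Measure Ω)]
    (n : ℕ) [NeZero n] (τ σ : ℝ) (hτ : 0 < τ) (hσ : 0 ≤ σ)
    (a : Fin n → Ω → ℝ) (w : Ω → ℝ)
    (ha_meas : ∀ i, Measurable (a i)) (hw_meas : Measurable w)
    (ha_indep : iIndepFun a ℙ)
    (ha_ident : ∀ i, IdentDistrib (a i) (a 0) ℙ ℙ)
    (ha_mom : ∀ p : ℕ, MemLp (a 0) p ℙ)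
    (ha_mean : ∫ ω, a 0 ω ∂ℙ = 0)
    (ha_var : ∫ ω, (a 0 ω) ^ 2 ∂ℙ = 1)
    (hw_indep : IndepFun (fun ω => fun i => a i ω) w ℙ)
    (hw_mom : ∀ p : ℕ, MemLp w p ℙ)
    (hw_mean : ∫ ω, w ω ∂ℙ = 0)
    (hw_var : ∫ ω, (w ω) ^ 2 ∂ℙ = σ ^ 2)
    (x ξ : Fin n → ℝ)
    (g : Fin n → Ω → ℝ)
    (hg : ∀ i ω, g i ω =
      τ * (w ω - (Real.sqrt n)⁻¹ * ∑ j, a j ω * (x j - ξ j)) * ((Real.sqrt n)⁻¹ * a i ω)) :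
    ∀ i, ∫ ω, (g i ω) ^ 2 ∂ℙ =
      τ ^ 2 / n * (σ ^ 2 + (n : ℝ)⁻¹ * ∑ j, (x j - ξ j) ^ 2)
        + τ ^ 2 * ((∫ ω, (a 0 ω) ^ 4 ∂ℙ) - 1) / n ^ 2 * (x i - ξ i) ^ 2 := by
  intro i
  classical
  set d : Fin n → ℝ := fun j => x j - ξ j with hd
  set c : ℝ := (Real.sqrt n)⁻¹ with hc
  have hnpos : (0 : ℝ) < n := by
    exact_mod_cast Nat.pos_of_ne_zero (NeZero.ne n)
  have hn0 : (n : ℝ) ≠ 0 := ne_of_gt hnpos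
  have hc2 : c ^ 2 = (n : ℝ)⁻¹ := by
    rw [hc, inv_pow, Real.sq_sqrt hnpos.le]
  -- moment infrastructure
  have hMa : ∀ j, ∀ p : ℕ, MemLp (a j) p ℙ := fun j p => (ha_ident j).memLp_iff.mpr (ha_mom p)
  have hInt : ∀ {f : Ω → ℝ}, (∀ p : ℕ, MemLp f p ℙ) → Integrable f ℙ := by
    intro f h
    have := h 1; rw [Nat.cast_one] at this; exact memLp_one_iff_integrable.mp this
  have hmom_eq : ∀ j (k : ℕ), ∫ ω, (a j ω) ^ k ∂ℙ = ∫ ω, (a 0 ω) ^ k ∂ℙ := fun j k =>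
    ((ha_ident j).comp (measurable_id.pow_const k)).integral_eq
  have hmean : ∀ j, ∫ ω, a j ω ∂ℙ = 0 := fun j => ((ha_ident j).integral_eq).trans ha_mean
  have hvar : ∀ j, ∫ ω, (a j ω) ^ 2 ∂ℙ = 1 := fun j => (hmom_eq j 2).trans ha_var
  -- S and T
  have hSmeas : Measurable (fun ω => ∑ j, a j ω * d j) :=
    Finset.measurable_sum _ (fun j _ => (ha_meas j).mul_const _)
  have hTmeas : Measurable (fun ω => ∑ j ∈ Finset.univ.erase i, a j ω * d j) :=
    Finset.measurable_sum _ (fun j _ => (ha_meas j).mul_const _)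
  have hMad : ∀ (j : Fin n) (p : ℕ), MemLp (fun ω => a j ω * d j) p ℙ := fun j p => by
    simpa [mul_comm] using (hMa j p).const_mul (d j)
  have hMS : ∀ p : ℕ, MemLp (fun ω => ∑ j, a j ω * d j) p ℙ := fun p =>
    memLp_finset_sum _ (fun j _ => hMad j p)
  have hMT : ∀ p : ℕ, MemLp (fun ω => ∑ j ∈ Finset.univ.erase i, a j ω * d j) p ℙ := fun p =>
    memLp_finset_sum _ (fun j _ => hMad j p)
  -- A = E[a_i^2 w^2] = σ^2
  have hA : ∫ ω, (a i ω) ^ 2 * (w ω) ^ 2 ∂ℙ = σ ^ 2 := by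
    have hiw : IndepFun (fun ω => (a i ω) ^ 2) (fun ω => (w ω) ^ 2) ℙ :=
      hw_indep.comp ((measurable_pi_apply i).pow_const 2) (measurable_id.pow_const 2)
    rw [hiw.integral_fun_mul_eq_mul_integral ((ha_meas i).pow_const 2).aestronglyMeasurable
      (hw_meas.pow_const 2).aestronglyMeasurable, hvar i, hw_var, one_mul]
  -- B = E[S a_i^2 w] = 0
  have hB : ∫ ω, (∑ j, a j ω * d j) * (a i ω) ^ 2 * w ω ∂ℙ = 0 := by
    have hφ : Measurable (fun v : Fin n → ℝ => (∑ j, v j * d j) * (v i) ^ 2) :=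
      (Finset.measurable_sum _ (fun j _ => (measurable_pi_apply j).mul_const _)).mul
        ((measurable_pi_apply i).pow_const 2)
    have hBind : IndepFun (fun ω => (∑ j, a j ω * d j) * (a i ω) ^ 2) w ℙ :=
      hw_indep.comp hφ measurable_id
    rw [hBind.integral_fun_mul_eq_mul_integral (hSmeas.mul ((ha_meas i).pow_const 2)).aestronglyMeasurable
      hw_meas.aestronglyMeasurable, hw_mean, mul_zero]
  -- independence of T and a i
  have hTind : IndepFun (fun ω => ∑ j ∈ Finset.univ.erase i, a j ω * d j) (a i) ℙ := by
    set b : Fin n → Ω → ℝ := fun j => (fun y => if j = i then y else y * d j) ∘ a j with hb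
    have hbmeas : ∀ j, Measurable (b j) := by
      intro j
      have hy : Measurable (fun y : ℝ => if j = i then y else y * d j) := by
        split
        · exact measurable_id
        · exact measurable_id.mul_const _
      exact hy.comp (ha_meas j)
    have hbind : iIndepFun b ℙ := by
      refine ha_indep.comp _ (fun j => ?_)
      by_cases h : j = i
      · simp only [h, if_pos]; exact measurable_id
      · simp only [if_neg h]; exact measurable_id.mul_const _
    have h := hbind.indepFun_finsetSum_of_notMem hbmeas (Finset.notMem_erase i Finset.univ)
    have h1 : (∑ j ∈ Finset.univ.erase i, b j) = fun ω => ∑ j ∈ Finset.univ.erase i, a j ω * d j := by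
      funext ω
      rw [Finset.sum_apply]
      exact Finset.sum_congr rfl fun j hj => by
        simp only [hb, Function.comp, if_neg (Finset.ne_of_mem_erase hj)]
    have h2 : b i = a i := by funext ω; simp [hb]
    rwa [h1, h2] at h
  -- E[T] = 0
  have hTmean : ∫ ω, (∑ j ∈ Finset.univ.erase i, a j ω * d j) ∂ℙ = 0 := by
    rw [integral_finset_sum _ (fun j _ => (hInt (hMa j)).mul_const _)]
    exact Finset.sum_eq_zero fun j _ => by rw [integral_mul_const, hmean j, zero_mul]
  -- E[a_i^3 T] = 0
  have hT3 : ∫ ω, (a i ω) ^ 3 * (∑ j ∈ Finset.univ.erase i, a j ω * d j) ∂ℙ = 0 := by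
    have hind : IndepFun (fun ω => (a i ω) ^ 3)
        (fun ω => ∑ j ∈ Finset.univ.erase i, a j ω * d j) ℙ :=
      hTind.symm.comp (measurable_id.pow_const 3) measurable_id
    rw [hind.integral_fun_mul_eq_mul_integral ((ha_meas i).pow_const 3).aestronglyMeasurable
      hTmeas.aestronglyMeasurable, hTmean, mul_zero]
  -- E[T^2] = Σ_{j≠i} d_j^2
  have hT2 : ∫ ω, (∑ j ∈ Finset.univ.erase i, a j ω * d j) ^ 2 ∂ℙ
      = ∑ j ∈ Finset.univ.erase i, (d j) ^ 2 := by
    have hexp : ∀ ω, (∑ j ∈ Finset.univ.erase i, a j ω * d j) ^ 2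
        = ∑ j ∈ Finset.univ.erase i, ∑ k ∈ Finset.univ.erase i,
            a j ω * a k ω * (d j * d k) := by
      intro ω
      rw [sq, Finset.sum_mul_sum]
      exact Finset.sum_congr rfl fun j _ => Finset.sum_congr rfl fun k _ => by ring
    rw [integral_congr_ae (Filter.Eventually.of_forall hexp)]
    have hIjk : ∀ j k : Fin n, Integrable (fun ω => a j ω * a k ω * (d j * d k)) ℙ :=
      fun j k => (hInt (memLp_mul_aux (hMa j) (hMa k))).mul_const _
    rw [integral_finset_sum _ (fun j _ => integrable_finset_sum _ (fun k _ => hIjk j k))]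
    refine Finset.sum_congr rfl fun j hj => ?_
    rw [integral_finset_sum _ (fun k _ => hIjk j k)]
    rw [Finset.sum_eq_single j]
    · rw [integral_mul_const]
      have : ∫ ω, a j ω * a j ω ∂ℙ = 1 := by
        rw [integral_congr_ae (Filter.Eventually.of_forall (fun ω => (sq (a j ω)).symm))]
        exact hvar j
      rw [this, one_mul, sq]
    · intro k _ hkj
      rw [integral_mul_const,
        ((ha_indep.indepFun (Ne.symm hkj)).integral_fun_mul_eq_mul_integral (ha_meas j).aestronglyMeasurable
          (ha_meas k).aestronglyMeasurable), hmean j, zero_mul, zero_mul]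
    · intro hj'; exact absurd hj hj'
  -- C = E[S^2 a_i^2]
  have hC : ∫ ω, (∑ j, a j ω * d j) ^ 2 * (a i ω) ^ 2 ∂ℙ
      = ∑ j, d j ^ 2 + ((∫ ω, (a 0 ω) ^ 4 ∂ℙ) - 1) * d i ^ 2 := by
    have hSd : ∀ ω, (∑ j, a j ω * d j)
        = a i ω * d i + ∑ j ∈ Finset.univ.erase i, a j ω * d j := fun ω =>
      (Finset.add_sum_erase _ _ (Finset.mem_univ i)).symm
    have hexp : ∀ ω, (∑ j, a j ω * d j) ^ 2 * (a i ω) ^ 2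
        = d i ^ 2 * (a i ω) ^ 4
          + (2 * d i) * ((a i ω) ^ 3 * (∑ j ∈ Finset.univ.erase i, a j ω * d j))
          + (a i ω) ^ 2 * (∑ j ∈ Finset.univ.erase i, a j ω * d j) ^ 2 := by
      intro ω; rw [hSd ω]; ring
    rw [integral_congr_ae (Filter.Eventually.of_forall hexp)]
    have I1 : Integrable (fun ω => d i ^ 2 * (a i ω) ^ 4) ℙ :=
      (hInt (memLp_pow_aux (hMa i) 4)).const_mul _
    have I2 : Integrable (fun ω =>
        (2 * d i) * ((a i ω) ^ 3 * (∑ j ∈ Finset.univ.erase i, a j ω * d j))) ℙ :=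
      (hInt (memLp_mul_aux (memLp_pow_aux (hMa i) 3) hMT)).const_mul _
    have I3 : Integrable (fun ω =>
        (a i ω) ^ 2 * (∑ j ∈ Finset.univ.erase i, a j ω * d j) ^ 2) ℙ :=
      hInt (memLp_mul_aux (memLp_pow_aux (hMa i) 2) (memLp_pow_aux hMT 2))
    have I12 : Integrable (fun ω => d i ^ 2 * (a i ω) ^ 4
        + (2 * d i) * ((a i ω) ^ 3 * (∑ j ∈ Finset.univ.erase i, a j ω * d j))) ℙ := I1.add I2
    rw [integral_add I12 I3, integral_add I1 I2, integral_const_mul,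
      integral_const_mul, hT3, mul_zero, add_zero]
    have hT2ind : IndepFun (fun ω => (a i ω) ^ 2)
        (fun ω => (∑ j ∈ Finset.univ.erase i, a j ω * d j) ^ 2) ℙ :=
      hTind.symm.comp (measurable_id.pow_const 2) (measurable_id.pow_const 2)
    rw [hT2ind.integral_fun_mul_eq_mul_integral ((ha_meas i).pow_const 2).aestronglyMeasurable
      (hTmeas.pow_const 2).aestronglyMeasurable, hvar i, one_mul, hT2, hmom_eq i 4,
      Finset.sum_erase_eq_sub (Finset.mem_univ i)]
    ring
  -- main expansion
  have hgeq : ∀ ω, (g i ω) ^ 2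
      = (τ ^ 2 * c ^ 2) * ((a i ω) ^ 2 * (w ω) ^ 2)
        - (2 * τ ^ 2 * c ^ 2 * c) * ((∑ j, a j ω * d j) * (a i ω) ^ 2 * w ω)
        + (τ ^ 2 * c ^ 2 * c ^ 2) * ((∑ j, a j ω * d j) ^ 2 * (a i ω) ^ 2) := by
    intro ω; rw [hg i ω]; ring
  rw [integral_congr_ae (Filter.Eventually.of_forall hgeq)]
  have J1 : Integrable (fun ω => (τ ^ 2 * c ^ 2) * ((a i ω) ^ 2 * (w ω) ^ 2)) ℙ :=
    (hInt (memLp_mul_aux (memLp_pow_aux (hMa i) 2) (memLp_pow_aux hw_mom 2))).const_mul _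
  have J2 : Integrable (fun ω =>
      (2 * τ ^ 2 * c ^ 2 * c) * ((∑ j, a j ω * d j) * (a i ω) ^ 2 * w ω)) ℙ :=
    (hInt (memLp_mul_aux (memLp_mul_aux hMS (memLp_pow_aux (hMa i) 2)) hw_mom)).const_mul _
  have J3 : Integrable (fun ω =>
      (τ ^ 2 * c ^ 2 * c ^ 2) * ((∑ j, a j ω * d j) ^ 2 * (a i ω) ^ 2)) ℙ :=
    (hInt (memLp_mul_aux (memLp_pow_aux hMS 2) (memLp_pow_aux (hMa i) 2))).const_mul _
  have J12 : Integrable (fun ω => (τ ^ 2 * c ^ 2) * ((a i ω) ^ 2 * (w ω) ^ 2)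
      - (2 * τ ^ 2 * c ^ 2 * c) * ((∑ j, a j ω * d j) * (a i ω) ^ 2 * w ω)) ℙ := J1.sub J2
  rw [integral_add J12 J3, integral_sub J1 J2, integral_const_mul, integral_const_mul,
    integral_const_mul, hA, hB, hC, mul_zero, sub_zero, hc2]
  simp only [hd]
  field_simp
  ring
end

section
/- Let Δ^i = g^i − φ(X^i + g^i)/n be the coordinate increment of the online regularized regression update, G(x, ξ) = −τ(x − ξ) − φ(x) the drift function, and F = σ(X, Ξ). Then there exists a finite constant C, depending only on τ, σ, the moments of a^1, the Lipschitz constant of φ, and E[(Ξ^1)^2], such that for every i: E[ |E[Δ^i | F] − (1/n) G(X^i, Ξ^i)| ] ≤ C (1 + E[e])^{1/2} / n^{3/2}. -/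
open MeasureTheory ProbabilityTheory
open scoped ENNReal

set_option maxHeartbeats 1000000 in
/-- Let `Δ^i = g^i − φ(X^i + g^i)/n` be the coordinate increment of the
online regularized regression update, `G(x, ξ) = −τ(x − ξ) − φ(x)` the drift function, and
`F = σ(X, Ξ)`.  Then there exists a finite constant `C`, depending only on `τ`, `σ`, the
moments of `a^1` (i.e. on its law `ν`), the Lipschitz constant of `φ`, and `E[(Ξ^1)^2]`, such
that for every `i`:  `E[ |E[Δ^i | F] − (1/n) G(X^i, Ξ^i)| ] ≤ C (1 + E[e])^{1/2} / n^{3/2}`. -/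
theorem online_regression_drift_approximation
    (τ σ : ℝ) (hτ : 0 < τ) (hσ : 0 ≤ σ) (K : NNReal) (M₂ : ℝ)
    (ν νw : Measure ℝ) [IsProbabilityMeasure ν] [IsProbabilityMeasure νw]
    (hν_mom : ∀ p : ℕ, MemLp id p ν)
    (hν_mean : ∫ t, t ∂ν = 0) (hν_var : ∫ t, t ^ 2 ∂ν = 1)
    (hνw_mom : ∀ p : ℕ, MemLp id p νw)
    (hνw_mean : ∫ t, t ∂νw = 0) (hνw_var : ∫ t, t ^ 2 ∂νw = σ ^ 2) :
    ∃ C : ℝ≥0∞, C ≠ ∞ ∧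
      ∀ (n : ℕ) (hn : 0 < n)
        (Ω : Type) [MeasurableSpace Ω] (μ : Measure Ω) [IsProbabilityMeasure μ]
        (φ : ℝ → ℝ), LipschitzWith K φ →
      ∀ (a : Fin n → Ω → ℝ) (w : Ω → ℝ),
        (∀ i, Measurable (a i)) → Measurable w →
        iIndepFun a μ →
        (∀ i, Measure.map (a i) μ = ν) →
        Measure.map w μ = νw →
        IndepFun (fun ω => fun i => a i ω) w μ →
      ∀ (X Ξ : Ω → Fin n → ℝ),
        Measurable X → Measurable Ξ →
        (∀ π : Equiv.Perm (Fin n),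
          Measure.map (fun ω => (fun i => X ω (π i), fun i => Ξ ω (π i))) μ
            = Measure.map (fun ω => (X ω, Ξ ω)) μ) →
        IndepFun (fun ω => (X ω, Ξ ω)) (fun ω => (fun i => a i ω, w ω)) μ →
        MemLp (fun ω => Ξ ω ⟨0, hn⟩) 2 μ →
        ∫ ω, (Ξ ω ⟨0, hn⟩) ^ 2 ∂μ ≤ M₂ →
      ∀ (g : Fin n → Ω → ℝ),
        (∀ i ω, g i ω =
          τ * (w ω - (Real.sqrt n)⁻¹ * ∑ j, a j ω * (X ω j - Ξ ω j))
            * ((Real.sqrt n)⁻¹ * a i ω)) →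
      ∀ (Δ : Fin n → Ω → ℝ),
        (∀ i ω, Δ i ω = g i ω - φ (X ω i + g i ω) / n) →
      ∀ (e : Ω → ℝ),
        (∀ ω, e ω = (n : ℝ)⁻¹ * ∑ j, (X ω j - Ξ ω j) ^ 2) →
      ∀ (F : MeasurableSpace Ω),
        F = MeasurableSpace.comap (fun ω => (X ω, Ξ ω)) inferInstance →
      ∀ i,
        ∫⁻ ω, ENNReal.ofReal
            |(μ[Δ i | F]) ω - (n : ℝ)⁻¹ * (-(τ * (X ω i - Ξ ω i)) - φ (X ω i))| ∂μ
          ≤ C * (1 + ∫⁻ ω, ENNReal.ofReal (e ω) ∂μ) ^ ((1 : ℝ) / 2)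
              / (n : ℝ≥0∞) ^ ((3 : ℝ) / 2) := by
  classical
  refine ⟨ENNReal.ofReal (((K : ℝ) + 1) * τ * (3 + 2 * σ ^ 2)) + 1,
    ENNReal.add_ne_top.mpr ⟨ENNReal.ofReal_ne_top, ENNReal.one_ne_top⟩, ?_⟩
  intro n hn Ω mΩ μ hμ φ hφ a w ha_meas hw_meas ha_indep ha_law hw_law haw_indep
    X Ξ hX hΞ hperm hindep2 hΞ1 _hΞ1M g hg Δ hΔ e he F hF i
  subst hF
  -- trivial case: `e` is not integrable
  by_cases hEtop : ∫⁻ ω, ENNReal.ofReal (e ω) ∂μ = ⊤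
  · rw [hEtop]
    have h1 : (1 + (⊤ : ℝ≥0∞)) ^ ((1 : ℝ) / 2) = ⊤ := by
      rw [add_top, ENNReal.top_rpow_of_pos (by norm_num)]
    have h2 : ((n : ℝ≥0∞) ^ ((3 : ℝ) / 2)) ≠ ⊤ :=
      ENNReal.rpow_ne_top_of_nonneg (by norm_num) (ENNReal.natCast_ne_top n)
    rw [h1, ENNReal.mul_top (by simp), ENNReal.top_div_of_ne_top h2]
    exact le_top
  -- main case
  have hnR : (0 : ℝ) < (n : ℝ) := Nat.cast_pos.mpr hn
  have hsn : (0 : ℝ) < Real.sqrt n := Real.sqrt_pos.mpr hnR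
  have hrn : (0 : ℝ) < (Real.sqrt n)⁻¹ := inv_pos.mpr hsn
  have hrnsq : ((Real.sqrt n)⁻¹) ^ 2 = (n : ℝ)⁻¹ := by
    rw [inv_pow, Real.sq_sqrt hnR.le]
  -- measurability of basic maps
  have hp : Measurable (fun ω => (X ω, Ξ ω)) := hX.prodMk hΞ
  have hm : MeasurableSpace.comap (fun ω : Ω => (X ω, Ξ ω)) inferInstance ≤ mΩ :=
    hp.comap_le
  haveI : IsFiniteMeasure (μ.trim hm) := isFiniteMeasure_trim hm
  have hXj : ∀ j, Measurable fun ω => X ω j := fun j => (measurable_pi_apply j).comp hX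
  have hΞj : ∀ j, Measurable fun ω => Ξ ω j := fun j => (measurable_pi_apply j).comp hΞ
  have hdj : ∀ j, Measurable fun ω => X ω j - Ξ ω j := fun j => (hXj j).sub (hΞj j)
  have hφm : Measurable φ := hφ.continuous.measurable
  -- moments of a and w
  have ha_L2 : ∀ j, MemLp (a j) 2 μ := by
    intro j
    have h := hν_mom 2
    rw [show ((2 : ℕ) : ℝ≥0∞) = 2 from by norm_num, ← ha_law j] at h
    exact (memLp_map_measure_iff aestronglyMeasurable_id (ha_meas j).aemeasurable).mp h
  have hw_L2 : MemLp w 2 μ := by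
    have h := hνw_mom 2
    rw [show ((2 : ℕ) : ℝ≥0∞) = 2 from by norm_num, ← hw_law] at h
    exact (memLp_map_measure_iff aestronglyMeasurable_id hw_meas.aemeasurable).mp h
  have ha_int : ∀ j, Integrable (a j) μ := fun j => (ha_L2 j).integrable one_le_two
  have hw_int : Integrable w μ := hw_L2.integrable one_le_two
  have ha_mean : ∀ j, ∫ ω, a j ω ∂μ = 0 := by
    intro j
    have h : ∫ t, id t ∂(Measure.map (a j) μ) = ∫ ω, id (a j ω) ∂μ :=
      integral_map (ha_meas j).aemeasurable aestronglyMeasurable_id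
    rw [ha_law j] at h
    simpa [hν_mean] using h.symm
  have hw_mean : ∫ ω, w ω ∂μ = 0 := by
    have h : ∫ t, id t ∂(Measure.map w μ) = ∫ ω, id (w ω) ∂μ :=
      integral_map hw_meas.aemeasurable aestronglyMeasurable_id
    rw [hw_law] at h
    simpa [hνw_mean] using h.symm
  have ha_sq : ∀ j, ∫ ω, (a j ω) ^ 2 ∂μ = 1 := by
    intro j
    have h : ∫ t, t ^ 2 ∂(Measure.map (a j) μ) = ∫ ω, (a j ω) ^ 2 ∂μ :=
      integral_map (ha_meas j).aemeasurable (measurable_id.pow_const 2).aestronglyMeasurable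
    rw [ha_law j, hν_var] at h
    exact h.symm
  have hw_sq : ∫ ω, (w ω) ^ 2 ∂μ = σ ^ 2 := by
    have h : ∫ t, t ^ 2 ∂(Measure.map w μ) = ∫ ω, (w ω) ^ 2 ∂μ :=
      integral_map hw_meas.aemeasurable (measurable_id.pow_const 2).aestronglyMeasurable
    rw [hw_law, hνw_var] at h
    exact h.symm
  have ha_sq_int : ∀ j, Integrable (fun ω => (a j ω) ^ 2) μ := fun j =>
    (memLp_two_iff_integrable_sq (ha_meas j).aestronglyMeasurable).mp (ha_L2 j)
  have hw_sq_int : Integrable (fun ω => (w ω) ^ 2) μ :=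
    (memLp_two_iff_integrable_sq hw_meas.aestronglyMeasurable).mp hw_L2
  -- independence helpers
  have mul_split : ∀ F1 F2 : Ω → ℝ, IndepFun F1 F2 μ → AEStronglyMeasurable F1 μ →
      AEStronglyMeasurable F2 μ →
      ∫ ω, F1 ω * F2 ω ∂μ = (∫ ω, F1 ω ∂μ) * ∫ ω, F2 ω ∂μ :=
    fun _ _ h h1 h2 => h.integral_mul_eq_mul_integral h1 h2
  have hwa_indep : ∀ j, IndepFun w (a j) μ :=
    fun j => (haw_indep.comp (measurable_pi_apply j) measurable_id).symm
  have hwa_int : ∀ j, Integrable (fun ω => w ω * a j ω) μ := fun j =>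
    (hwa_indep j).integrable_mul hw_int (ha_int j)
  have hwa_mean : ∀ j, ∫ ω, w ω * a j ω ∂μ = 0 := by
    intro j
    rw [mul_split _ _ (hwa_indep j) hw_meas.aestronglyMeasurable
      (ha_meas j).aestronglyMeasurable, hw_mean, zero_mul]
  have haa_int : ∀ j k : Fin n, Integrable (fun ω => a j ω * a k ω) μ := by
    intro j k
    have hbd : Integrable (fun ω => ((a j ω) ^ 2 + (a k ω) ^ 2) / 2) μ :=
      ((ha_sq_int j).add (ha_sq_int k)).div_const 2
    refine Integrable.mono' hbd
      ((ha_meas j).mul (ha_meas k)).aestronglyMeasurable (ae_of_all _ fun ω => ?_)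
    rw [Real.norm_eq_abs, abs_mul]
    nlinarith [sq_nonneg (|a j ω| - |a k ω|), sq_abs (a j ω), sq_abs (a k ω),
      abs_nonneg (a j ω), abs_nonneg (a k ω)]
  have haa_mean : ∀ j k : Fin n, j ≠ k → ∫ ω, a j ω * a k ω ∂μ = 0 := by
    intro j k hjk
    rw [mul_split _ _ (ha_indep.indepFun hjk) (ha_meas j).aestronglyMeasurable
      (ha_meas k).aestronglyMeasurable, ha_mean, zero_mul]
  have haa_self : ∀ j : Fin n, ∫ ω, a j ω * a j ω ∂μ = 1 := by
    intro j
    rw [show (fun ω => a j ω * a j ω) = fun ω => (a j ω) ^ 2 from funext fun ω => (sq _).symm]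
    exact ha_sq j
  -- independence between the (X,Ξ)-side and the (a,w)-side
  have hsplitXa : ∀ (f : (Fin n → ℝ) × (Fin n → ℝ) → ℝ) (h : (Fin n → ℝ) × ℝ → ℝ),
      Measurable f → Measurable h →
      IndepFun (fun ω => f (X ω, Ξ ω)) (fun ω => h (fun k => a k ω, w ω)) μ :=
    fun f h hf hh => hindep2.comp hf hh
  -- e integrable
  have he_nonneg : ∀ ω, 0 ≤ e ω := fun ω => by
    rw [he]
    positivity
  have he_eq : e = fun ω => (n : ℝ)⁻¹ * ∑ j, (X ω j - Ξ ω j) ^ 2 := funext he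
  have he_meas : Measurable e := by
    rw [he_eq]
    exact measurable_const.mul (Finset.measurable_sum _ fun j _ => (hdj j).pow_const 2)
  have he_int : Integrable e μ :=
    ⟨he_meas.aestronglyMeasurable,
      (hasFiniteIntegral_iff_ofReal (ae_of_all _ he_nonneg)).mpr (lt_top_iff_ne_top.mpr hEtop)⟩
  set Ee : ℝ := ∫ ω, e ω ∂μ with hEe_def
  have hEe0 : 0 ≤ Ee := integral_nonneg he_nonneg
  -- square-integrability of the differences
  have hd_sq_int : ∀ j, Integrable (fun ω => (X ω j - Ξ ω j) ^ 2) μ := by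
    intro j
    refine Integrable.mono' (he_int.const_mul n) ((hdj j).pow_const 2).aestronglyMeasurable
      (ae_of_all _ fun ω => ?_)
    rw [Real.norm_eq_abs, abs_of_nonneg (sq_nonneg _), he]
    have h1 : (X ω j - Ξ ω j) ^ 2 ≤ ∑ k, (X ω k - Ξ ω k) ^ 2 :=
      Finset.single_le_sum (f := fun k => (X ω k - Ξ ω k) ^ 2)
        (fun k _ => sq_nonneg _) (Finset.mem_univ j)
    calc (X ω j - Ξ ω j) ^ 2 ≤ ∑ k, (X ω k - Ξ ω k) ^ 2 := h1
      _ = (n : ℝ) * ((n : ℝ)⁻¹ * ∑ k, (X ω k - Ξ ω k) ^ 2) := by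
          rw [← mul_assoc, mul_inv_cancel₀ hnR.ne', one_mul]
  have hd_L2 : ∀ j, MemLp (fun ω => X ω j - Ξ ω j) 2 μ := fun j =>
    (memLp_two_iff_integrable_sq (hdj j).aestronglyMeasurable).mpr (hd_sq_int j)
  have hd_int : ∀ j, Integrable (fun ω => X ω j - Ξ ω j) μ := fun j =>
    (hd_L2 j).integrable one_le_two
  have hdd_int : ∀ j k, Integrable (fun ω => (X ω j - Ξ ω j) * (X ω k - Ξ ω k)) μ := by
    intro j k
    have hbd : Integrable (fun ω => ((X ω j - Ξ ω j) ^ 2 + (X ω k - Ξ ω k) ^ 2) / 2) μ :=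
      ((hd_sq_int j).add (hd_sq_int k)).div_const 2
    refine Integrable.mono' hbd
      ((hdj j).mul (hdj k)).aestronglyMeasurable (ae_of_all _ fun ω => ?_)
    rw [Real.norm_eq_abs, abs_mul]
    nlinarith [sq_nonneg (|X ω j - Ξ ω j| - |X ω k - Ξ ω k|), sq_abs (X ω j - Ξ ω j),
      sq_abs (X ω k - Ξ ω k), abs_nonneg (X ω j - Ξ ω j), abs_nonneg (X ω k - Ξ ω k)]
  have hsum_dsq : ∑ j, ∫ ω, (X ω j - Ξ ω j) ^ 2 ∂μ = (n : ℝ) * Ee := by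
    have h1 : Ee = (n : ℝ)⁻¹ * ∑ j, ∫ ω, (X ω j - Ξ ω j) ^ 2 ∂μ := by
      rw [hEe_def, he_eq]
      rw [integral_const_mul, integral_finset_sum _ fun j _ => hd_sq_int j]
    rw [h1, ← mul_assoc, mul_inv_cancel₀ hnR.ne', one_mul]
  -- law of Ξ^j equals law of Ξ^1 (exchangeability)
  have hΞ_L2 : ∀ j, MemLp (fun ω => Ξ ω j) 2 μ := by
    intro j
    have hswap := hperm (Equiv.swap ⟨0, hn⟩ j)
    have hmeas1 : Measurable (fun ω =>
        ((fun k => X ω ((Equiv.swap (⟨0, hn⟩ : Fin n) j) k)),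
         (fun k => Ξ ω ((Equiv.swap (⟨0, hn⟩ : Fin n) j) k)))) :=
      (measurable_pi_lambda _ fun k => hXj _).prodMk (measurable_pi_lambda _ fun k => hΞj _)
    have hproj : Measurable (fun q : (Fin n → ℝ) × (Fin n → ℝ) => q.2 ⟨0, hn⟩) :=
      (measurable_pi_apply _).comp measurable_snd
    have h2 := congrArg (Measure.map (fun q : (Fin n → ℝ) × (Fin n → ℝ) => q.2 ⟨0, hn⟩)) hswap
    rw [Measure.map_map hproj hmeas1, Measure.map_map hproj hp] at h2
    simp only [Function.comp_def, Equiv.swap_apply_left] at h2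
    have h1 : MemLp id 2 (Measure.map (fun ω => Ξ ω ⟨0, hn⟩) μ) :=
      (memLp_map_measure_iff aestronglyMeasurable_id (hΞj _).aemeasurable).mpr hΞ1
    rw [← h2] at h1
    exact (memLp_map_measure_iff aestronglyMeasurable_id (hΞj j).aemeasurable).mp h1
  have hΞ_int : ∀ j, Integrable (fun ω => Ξ ω j) μ := fun j => (hΞ_L2 j).integrable one_le_two
  have hX_int : ∀ j, Integrable (fun ω => X ω j) μ := by
    intro j
    have h : (fun ω => X ω j) = fun ω => (X ω j - Ξ ω j) + Ξ ω j := funext fun ω => by ring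
    rw [h]
    exact (hd_int j).add (hΞ_int j)
  -- Lipschitz bounds
  have hφ_abs : ∀ x : ℝ, |φ x| ≤ |φ 0| + (K : ℝ) * |x| := by
    intro x
    have h := hφ.dist_le_mul x 0
    rw [Real.dist_eq, Real.dist_eq, sub_zero] at h
    calc |φ x| = |φ x - φ 0 + φ 0| := by ring_nf
      _ ≤ |φ x - φ 0| + |φ 0| := abs_add_le _ _
      _ ≤ (K : ℝ) * |x| + |φ 0| := by linarith
      _ = |φ 0| + (K : ℝ) * |x| := by ring
  have hφcomp_int : ∀ f : Ω → ℝ, Measurable f → Integrable f μ →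
      Integrable (fun ω => φ (f ω)) μ := by
    intro f hfm hfi
    have hbd : Integrable (fun ω => |φ 0| + (K : ℝ) * |f ω|) μ :=
      (integrable_const _).add (hfi.abs.const_mul _)
    refine Integrable.mono' hbd (hφm.comp hfm).aestronglyMeasurable (ae_of_all _ fun ω => ?_)
    rw [Real.norm_eq_abs]
    exact hφ_abs (f ω)
  have hφX_int : Integrable (fun ω => φ (X ω i)) μ := hφcomp_int _ (hXj i) (hX_int i)
  -- the update term g i
  have hT_int : ∀ j, Integrable (fun ω => a j ω * a i ω * (X ω j - Ξ ω j)) μ := by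
    intro j
    have hI : IndepFun (fun ω => a j ω * a i ω) (fun ω => X ω j - Ξ ω j) μ :=
      (hsplitXa (fun q => q.1 j - q.2 j) (fun v => v.1 j * v.1 i)
        (((measurable_pi_apply j).comp measurable_fst).sub
          ((measurable_pi_apply j).comp measurable_snd))
        (((measurable_pi_apply j).comp measurable_fst).mul
          ((measurable_pi_apply i).comp measurable_fst))).symm
    exact hI.integrable_mul (haa_int j i) (hd_int j)
  have hg' : g i = fun ω => τ * (Real.sqrt n)⁻¹ * (w ω * a i ω)
      - τ * ((Real.sqrt n)⁻¹) ^ 2 * ∑ j, a j ω * a i ω * (X ω j - Ξ ω j) := by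
    funext ω
    have hsum : (∑ j, a j ω * a i ω * (X ω j - Ξ ω j))
        = (∑ j, a j ω * (X ω j - Ξ ω j)) * a i ω := by
      rw [Finset.sum_mul]
      exact Finset.sum_congr rfl fun j _ => by ring
    rw [hg, hsum]
    ring
  have hg_meas : Measurable (g i) := by
    rw [hg']
    exact (measurable_const.mul (hw_meas.mul (ha_meas i))).sub (measurable_const.mul
      (Finset.measurable_sum _ fun j _ => ((ha_meas j).mul (ha_meas i)).mul (hdj j)))
  have hgi_int : Integrable (g i) μ := by
    rw [hg']
    exact ((hwa_int i).const_mul _).sub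
      ((integrable_finset_sum _ fun j _ => hT_int j).const_mul _)
  -- conditional expectation of g i is -(τ d^i)/n
  have hc_int : Integrable (fun ω => -(τ * (X ω i - Ξ ω i)) / n) μ :=
    (((hd_int i).const_mul τ).neg).div_const _
  have hpF : Measurable[MeasurableSpace.comap (fun ω : Ω => (X ω, Ξ ω)) inferInstance]
      (fun ω => (X ω, Ξ ω)) := measurable_iff_comap_le.mpr le_rfl
  have hcond_g : (fun ω => -(τ * (X ω i - Ξ ω i)) / n)
      =ᵐ[μ] μ[g i|MeasurableSpace.comap (fun ω : Ω => (X ω, Ξ ω)) inferInstance] := by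
    refine ae_eq_condExp_of_forall_setIntegral_eq hm hgi_int
      (fun s _ _ => hc_int.integrableOn) ?_ ?_
    · rintro s hs -
      obtain ⟨t, ht, rfl⟩ := hs
      set I : Ω → ℝ := fun ω => Set.indicator t (fun _ => (1 : ℝ)) (X ω, Ξ ω) with hI_def
      have hI_meas : Measurable I := (measurable_const.indicator ht).comp hp
      have hI_bdd : ∀ ω, ‖I ω‖ ≤ 1 := fun ω => by
        rw [hI_def, Real.norm_eq_abs]
        by_cases hω : (X ω, Ξ ω) ∈ t <;> simp [Set.indicator_apply, hω]
      have hs_meas : MeasurableSet ((fun ω => (X ω, Ξ ω)) ⁻¹' t) := hp ht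
      have hind : ∀ f : Ω → ℝ,
          ∫ ω in (fun ω => (X ω, Ξ ω)) ⁻¹' t, f ω ∂μ = ∫ ω, I ω * f ω ∂μ := by
        intro f
        rw [← integral_indicator hs_meas]
        refine integral_congr_ae (ae_of_all _ fun ω => ?_)
        rw [hI_def]
        simp only [Set.indicator_apply, Set.mem_preimage]
        by_cases hω : (X ω, Ξ ω) ∈ t <;> simp [hω]
      rw [hind, hind]
      have hIdaa_indep : ∀ j, IndepFun (fun ω => I ω * (X ω j - Ξ ω j))
          (fun ω => a j ω * a i ω) μ := fun j =>
        hsplitXa (fun q => Set.indicator t (fun _ => (1 : ℝ)) q * (q.1 j - q.2 j))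
          (fun v => v.1 j * v.1 i)
          ((measurable_const.indicator ht).mul
            (((measurable_pi_apply j).comp measurable_fst).sub
              ((measurable_pi_apply j).comp measurable_snd)))
          (((measurable_pi_apply j).comp measurable_fst).mul
            ((measurable_pi_apply i).comp measurable_fst))
      have hint1 : Integrable (fun ω => I ω * (w ω * a i ω)) μ :=
        (hwa_int i).bdd_mul hI_meas.aestronglyMeasurable (ae_of_all _ hI_bdd)
      have hint2 : ∀ j, Integrable (fun ω => (I ω * (X ω j - Ξ ω j)) * (a j ω * a i ω)) μ := by
        intro j
        have hId : Integrable (fun ω => I ω * (X ω j - Ξ ω j)) μ :=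
          (hd_int j).bdd_mul hI_meas.aestronglyMeasurable (ae_of_all _ hI_bdd)
        exact (hIdaa_indep j).integrable_mul hId (haa_int j i)
      have hexp : (fun ω => I ω * g i ω)
          = fun ω => τ * (Real.sqrt n)⁻¹ * (I ω * (w ω * a i ω))
            - τ * ((Real.sqrt n)⁻¹) ^ 2
              * ∑ j, (I ω * (X ω j - Ξ ω j)) * (a j ω * a i ω) := by
        funext ω
        rw [hg']
        have hsum : ∑ j, (I ω * (X ω j - Ξ ω j)) * (a j ω * a i ω)
            = I ω * ∑ j, a j ω * a i ω * (X ω j - Ξ ω j) := by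
          rw [Finset.mul_sum]
          exact Finset.sum_congr rfl fun j _ => by ring
        rw [hsum]
        ring
      have hIg_val : ∫ ω, I ω * g i ω ∂μ
          = -(τ * ((Real.sqrt n)⁻¹) ^ 2) * ∫ ω, I ω * (X ω i - Ξ ω i) ∂μ := by
        rw [hexp, integral_sub (hint1.const_mul _)
            ((integrable_finset_sum _ fun j _ => hint2 j).const_mul _),
          integral_const_mul, integral_const_mul,
          integral_finset_sum _ fun j _ => hint2 j]
        have hIwa : ∫ ω, I ω * (w ω * a i ω) ∂μ = 0 := by
          have hII : IndepFun I (fun ω => w ω * a i ω) μ :=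
            hsplitXa (fun q => Set.indicator t (fun _ => (1 : ℝ)) q) (fun v => v.2 * v.1 i)
              (measurable_const.indicator ht)
              (measurable_snd.mul ((measurable_pi_apply i).comp measurable_fst))
          rw [mul_split _ _ hII hI_meas.aestronglyMeasurable
            (hw_meas.mul (ha_meas i)).aestronglyMeasurable, hwa_mean i, mul_zero]
        have hterm : ∀ j, ∫ ω, (I ω * (X ω j - Ξ ω j)) * (a j ω * a i ω) ∂μ
            = (∫ ω, I ω * (X ω j - Ξ ω j) ∂μ) * ∫ ω, a j ω * a i ω ∂μ := fun j =>
          mul_split _ _ (hIdaa_indep j) (hI_meas.mul (hdj j)).aestronglyMeasurable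
            ((ha_meas j).mul (ha_meas i)).aestronglyMeasurable
        have hsum_eval : ∑ j, ∫ ω, (I ω * (X ω j - Ξ ω j)) * (a j ω * a i ω) ∂μ
            = ∫ ω, I ω * (X ω i - Ξ ω i) ∂μ := by
          rw [Finset.sum_congr rfl fun j _ => hterm j, Finset.sum_eq_single i]
          · rw [haa_self i, mul_one]
          · intro j _ hji
            rw [haa_mean j i hji, mul_zero]
          · intro h
            exact absurd (Finset.mem_univ i) h
        rw [hIwa, hsum_eval]
        ring
      have hIc_val : ∫ ω, I ω * (-(τ * (X ω i - Ξ ω i)) / n) ∂μ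
          = -(τ * ((Real.sqrt n)⁻¹) ^ 2) * ∫ ω, I ω * (X ω i - Ξ ω i) ∂μ := by
        have h1 : (fun ω => I ω * (-(τ * (X ω i - Ξ ω i)) / n))
            = fun ω => (-(τ * (n : ℝ)⁻¹)) * (I ω * (X ω i - Ξ ω i)) := by
          funext ω
          ring
        rw [h1, integral_const_mul, hrnsq]
      rw [hIc_val, hIg_val]
    · have hmeasc : Measurable[MeasurableSpace.comap (fun ω : Ω => (X ω, Ξ ω)) inferInstance]
          (fun ω => -(τ * (X ω i - Ξ ω i)) / n) := by
        have h0 : Measurable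
            (fun q : (Fin n → ℝ) × (Fin n → ℝ) => -(τ * (q.1 i - q.2 i)) / (n : ℝ)) :=
          Measurable.div_const (measurable_const.mul
            (((measurable_pi_apply i).comp measurable_fst).sub
              ((measurable_pi_apply i).comp measurable_snd))).neg _
        exact h0.comp hpF
      exact hmeasc.stronglyMeasurable.aestronglyMeasurable
  -- conditional expectation algebra
  have hψ_int : Integrable (fun ω => φ (X ω i + g i ω)) μ :=
    hφcomp_int _ ((hXj i).add hg_meas) ((hX_int i).add hgi_int)
  have hΔeq : Δ i = g i - (n : ℝ)⁻¹ • (fun ω => φ (X ω i + g i ω)) := by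
    funext ω
    simp only [Pi.sub_apply, Pi.smul_apply, smul_eq_mul, hΔ]
    ring
  have hφX_measF : Measurable[MeasurableSpace.comap (fun ω : Ω => (X ω, Ξ ω)) inferInstance] (fun ω => φ (X ω i)) := by
    have h0 : Measurable (fun q : (Fin n → ℝ) × (Fin n → ℝ) => φ (q.1 i)) :=
      hφm.comp ((measurable_pi_apply i).comp measurable_fst)
    exact h0.comp hpF
  have hcond_φX : μ[(fun ω => φ (X ω i))|MeasurableSpace.comap (fun ω : Ω => (X ω, Ξ ω)) inferInstance] = fun ω => φ (X ω i) :=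
    condExp_of_stronglyMeasurable hm hφX_measF.stronglyMeasurable hφX_int
  have hcondΔ : μ[Δ i|MeasurableSpace.comap (fun ω : Ω => (X ω, Ξ ω)) inferInstance] =ᵐ[μ] fun ω =>
      (μ[g i|MeasurableSpace.comap (fun ω : Ω => (X ω, Ξ ω)) inferInstance]) ω
        - (n : ℝ)⁻¹ * (μ[(fun ω => φ (X ω i + g i ω))|MeasurableSpace.comap (fun ω : Ω => (X ω, Ξ ω)) inferInstance]) ω := by
    rw [hΔeq]
    have h1 := condExp_sub (μ := μ) (m := MeasurableSpace.comap (fun ω : Ω => (X ω, Ξ ω)) inferInstance) hgi_int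
      (hψ_int.smul ((n : ℝ)⁻¹))
    have h2 := condExp_smul (μ := μ) (m := MeasurableSpace.comap (fun ω : Ω => (X ω, Ξ ω)) inferInstance) ((n : ℝ)⁻¹)
      (fun ω => φ (X ω i + g i ω))
    filter_upwards [h1, h2] with ω e1 e2
    rw [e1, Pi.sub_apply, e2, Pi.smul_apply, smul_eq_mul]
  have hcond_h0 : μ[(fun ω => φ (X ω i + g i ω) - φ (X ω i))|MeasurableSpace.comap (fun ω : Ω => (X ω, Ξ ω)) inferInstance]
      =ᵐ[μ] fun ω => (μ[(fun ω => φ (X ω i + g i ω))|MeasurableSpace.comap (fun ω : Ω => (X ω, Ξ ω)) inferInstance]) ω - φ (X ω i) := by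
    have h1 := condExp_sub (μ := μ) (m := MeasurableSpace.comap (fun ω : Ω => (X ω, Ξ ω)) inferInstance) hψ_int hφX_int
    filter_upwards [h1] with ω e1
    rw [show (fun ω => φ (X ω i + g i ω) - φ (X ω i))
        = (fun ω => φ (X ω i + g i ω)) - (fun ω => φ (X ω i)) from rfl,
      e1, Pi.sub_apply, hcond_φX]
  have hmaster : ∀ᵐ ω ∂μ,
      |(μ[Δ i|MeasurableSpace.comap (fun ω : Ω => (X ω, Ξ ω)) inferInstance]) ω - (n : ℝ)⁻¹ * (-(τ * (X ω i - Ξ ω i)) - φ (X ω i))|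
        ≤ (n : ℝ)⁻¹ * |(μ[(fun ω => φ (X ω i + g i ω) - φ (X ω i))|MeasurableSpace.comap (fun ω : Ω => (X ω, Ξ ω)) inferInstance]) ω| := by
    filter_upwards [hcondΔ, hcond_g, hcond_h0] with ω e1 e2 e3
    have key : (μ[Δ i|MeasurableSpace.comap (fun ω : Ω => (X ω, Ξ ω)) inferInstance]) ω - (n : ℝ)⁻¹ * (-(τ * (X ω i - Ξ ω i)) - φ (X ω i))
        = -((n : ℝ)⁻¹ * ((μ[(fun ω => φ (X ω i + g i ω) - φ (X ω i))|MeasurableSpace.comap (fun ω : Ω => (X ω, Ξ ω)) inferInstance]) ω)) := by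
      rw [e1, ← e2, e3]
      ring
    rw [key, abs_neg, abs_mul, abs_of_nonneg (inv_nonneg.mpr hnR.le)]
  have hA_int : Integrable (fun ω =>
      (μ[Δ i|MeasurableSpace.comap (fun ω : Ω => (X ω, Ξ ω)) inferInstance]) ω - (n : ℝ)⁻¹ * (-(τ * (X ω i - Ξ ω i)) - φ (X ω i))) μ :=
    integrable_condExp.sub ((((hd_int i).const_mul τ).neg.sub hφX_int).const_mul _)
  have habs_cond : ∫ ω, |(μ[(fun ω => φ (X ω i + g i ω) - φ (X ω i))|MeasurableSpace.comap (fun ω : Ω => (X ω, Ξ ω)) inferInstance]) ω| ∂μ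
      ≤ ∫ ω, |φ (X ω i + g i ω) - φ (X ω i)| ∂μ :=
    integral_abs_condExp_le _
  have hlip_bound : ∫ ω, |φ (X ω i + g i ω) - φ (X ω i)| ∂μ
      ≤ (K : ℝ) * ∫ ω, |g i ω| ∂μ := by
    rw [← integral_const_mul]
    refine integral_mono ((hψ_int.sub hφX_int).abs) (hgi_int.abs.const_mul _) fun ω => ?_
    have h := hφ.dist_le_mul (X ω i + g i ω) (X ω i)
    rw [Real.dist_eq, Real.dist_eq, add_sub_cancel_left] at h
    exact h
  have hkey : ∫ ω, |(μ[Δ i|MeasurableSpace.comap (fun ω : Ω => (X ω, Ξ ω)) inferInstance]) ω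
        - (n : ℝ)⁻¹ * (-(τ * (X ω i - Ξ ω i)) - φ (X ω i))| ∂μ
      ≤ (n : ℝ)⁻¹ * ((K : ℝ) * ∫ ω, |g i ω| ∂μ) := by
    calc ∫ ω, |(μ[Δ i|MeasurableSpace.comap (fun ω : Ω => (X ω, Ξ ω)) inferInstance]) ω
          - (n : ℝ)⁻¹ * (-(τ * (X ω i - Ξ ω i)) - φ (X ω i))| ∂μ
        ≤ ∫ ω, (n : ℝ)⁻¹
            * |(μ[(fun ω => φ (X ω i + g i ω) - φ (X ω i))|MeasurableSpace.comap (fun ω : Ω => (X ω, Ξ ω)) inferInstance]) ω| ∂μ :=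
          integral_mono_ae hA_int.abs (integrable_condExp.abs.const_mul _) hmaster
      _ = (n : ℝ)⁻¹
            * ∫ ω, |(μ[(fun ω => φ (X ω i + g i ω) - φ (X ω i))|MeasurableSpace.comap (fun ω : Ω => (X ω, Ξ ω)) inferInstance]) ω| ∂μ :=
          integral_const_mul _ _
      _ ≤ (n : ℝ)⁻¹ * ((K : ℝ) * ∫ ω, |g i ω| ∂μ) := by
          apply mul_le_mul_of_nonneg_left _ (inv_nonneg.mpr hnR.le)
          exact le_trans habs_cond hlip_bound
  -- second moment of the weighted sum
  have haadd_indep : ∀ j k : Fin n, IndepFun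
      (fun ω => a j ω * a k ω) (fun ω => (X ω j - Ξ ω j) * (X ω k - Ξ ω k)) μ := fun j k =>
    (hsplitXa (fun q => (q.1 j - q.2 j) * (q.1 k - q.2 k)) (fun v => v.1 j * v.1 k)
      ((((measurable_pi_apply j).comp measurable_fst).sub
        ((measurable_pi_apply j).comp measurable_snd)).mul
       (((measurable_pi_apply k).comp measurable_fst).sub
        ((measurable_pi_apply k).comp measurable_snd)))
      (((measurable_pi_apply j).comp measurable_fst).mul
        ((measurable_pi_apply k).comp measurable_fst))).symm
  have huu_int : ∀ j k : Fin n, Integrable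
      (fun ω => (a j ω * (X ω j - Ξ ω j)) * (a k ω * (X ω k - Ξ ω k))) μ := by
    intro j k
    have h := (haadd_indep j k).integrable_mul (haa_int j k) (hdd_int j k)
    refine h.congr (ae_of_all _ fun ω => ?_)
    show (a j ω * a k ω) * ((X ω j - Ξ ω j) * (X ω k - Ξ ω k)) = _
    ring
  have hSsq_expand : (fun ω => (∑ j, a j ω * (X ω j - Ξ ω j)) ^ 2)
      = fun ω => ∑ j, ∑ k, (a j ω * (X ω j - Ξ ω j)) * (a k ω * (X ω k - Ξ ω k)) := by
    funext ω
    rw [sq, Finset.sum_mul_sum]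
  have hS2_int : Integrable (fun ω => (∑ j, a j ω * (X ω j - Ξ ω j)) ^ 2) μ := by
    rw [hSsq_expand]
    exact integrable_finset_sum _ fun j _ => integrable_finset_sum _ fun k _ => huu_int j k
  have hval : ∀ j k : Fin n,
      ∫ ω, (a j ω * (X ω j - Ξ ω j)) * (a k ω * (X ω k - Ξ ω k)) ∂μ
        = (∫ ω, a j ω * a k ω ∂μ) * ∫ ω, (X ω j - Ξ ω j) * (X ω k - Ξ ω k) ∂μ := by
    intro j k
    have h1 : (fun ω => (a j ω * (X ω j - Ξ ω j)) * (a k ω * (X ω k - Ξ ω k)))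
        = fun ω => (a j ω * a k ω) * ((X ω j - Ξ ω j) * (X ω k - Ξ ω k)) := by
      funext ω
      ring
    rw [h1]
    exact mul_split _ _ (haadd_indep j k) ((ha_meas j).mul (ha_meas k)).aestronglyMeasurable
      ((hdj j).mul (hdj k)).aestronglyMeasurable
  have hdiag : ∀ j : Fin n,
      ∑ k, ∫ ω, (a j ω * (X ω j - Ξ ω j)) * (a k ω * (X ω k - Ξ ω k)) ∂μ
        = ∫ ω, (X ω j - Ξ ω j) ^ 2 ∂μ := by
    intro j
    rw [Finset.sum_congr rfl fun k _ => hval j k, Finset.sum_eq_single j]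
    · rw [haa_self j, one_mul, show (fun ω => (X ω j - Ξ ω j) * (X ω j - Ξ ω j))
        = fun ω => (X ω j - Ξ ω j) ^ 2 from funext fun ω => (sq _).symm]
    · intro k _ hkj
      rw [haa_mean j k (Ne.symm hkj), zero_mul]
    · intro h
      exact absurd (Finset.mem_univ j) h
  have hS2_val : ∫ ω, (∑ j, a j ω * (X ω j - Ξ ω j)) ^ 2 ∂μ = (n : ℝ) * Ee := by
    rw [hSsq_expand,
      integral_finset_sum _ fun j _ => integrable_finset_sum _ fun k _ => huu_int j k,
      Finset.sum_congr rfl fun j _ => integral_finset_sum _ fun k _ => huu_int j k,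
      Finset.sum_congr rfl fun j _ => hdiag j, hsum_dsq]
  -- second moment of W := w - rn * S
  have hW_meas : Measurable (fun ω => (w ω - (Real.sqrt n)⁻¹ * ∑ j, a j ω * (X ω j - Ξ ω j))) :=
    hw_meas.sub (measurable_const.mul
      (Finset.measurable_sum _ fun j _ => (ha_meas j).mul (hdj j)))
  have hW2_ptwise : ∀ ω, (w ω - (Real.sqrt n)⁻¹ * ∑ j, a j ω * (X ω j - Ξ ω j)) ^ 2 ≤ 2 * (w ω) ^ 2 + 2 * ((Real.sqrt n)⁻¹) ^ 2 * (∑ j, a j ω * (X ω j - Ξ ω j)) ^ 2 := by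
    intro ω
    nlinarith [sq_nonneg (w ω + (Real.sqrt n)⁻¹ * ∑ j, a j ω * (X ω j - Ξ ω j))]
  have hW2bd_int : Integrable
      (fun ω => 2 * (w ω) ^ 2 + 2 * ((Real.sqrt n)⁻¹) ^ 2 * (∑ j, a j ω * (X ω j - Ξ ω j)) ^ 2) μ :=
    (hw_sq_int.const_mul 2).add (hS2_int.const_mul _)
  have hW2_int : Integrable (fun ω => (w ω - (Real.sqrt n)⁻¹ * ∑ j, a j ω * (X ω j - Ξ ω j)) ^ 2) μ := by
    refine Integrable.mono' hW2bd_int (hW_meas.pow_const 2).aestronglyMeasurable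
      (ae_of_all _ fun ω => ?_)
    rw [Real.norm_eq_abs, abs_of_nonneg (sq_nonneg _)]
    exact hW2_ptwise ω
  have hW2_val : ∫ ω, (w ω - (Real.sqrt n)⁻¹ * ∑ j, a j ω * (X ω j - Ξ ω j)) ^ 2 ∂μ ≤ 2 * σ ^ 2 + 2 * Ee := by
    calc ∫ ω, (w ω - (Real.sqrt n)⁻¹ * ∑ j, a j ω * (X ω j - Ξ ω j)) ^ 2 ∂μ
        ≤ ∫ ω, 2 * (w ω) ^ 2 + 2 * ((Real.sqrt n)⁻¹) ^ 2 * (∑ j, a j ω * (X ω j - Ξ ω j)) ^ 2 ∂μ :=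
          integral_mono hW2_int hW2bd_int hW2_ptwise
      _ = 2 * σ ^ 2 + 2 * ((Real.sqrt n)⁻¹) ^ 2 * ((n : ℝ) * Ee) := by
          rw [integral_add (hw_sq_int.const_mul 2) (hS2_int.const_mul _),
            integral_const_mul, integral_const_mul, hw_sq, hS2_val]
      _ = 2 * σ ^ 2 + 2 * Ee := by
          rw [hrnsq]
          field_simp
  -- AM-GM bound for ∫ |g i|
  have hL0 : (0 : ℝ) < (Real.sqrt (1 + Ee)) := Real.sqrt_pos.mpr (by linarith)
  have hLsq : (Real.sqrt (1 + Ee)) ^ 2 = 1 + Ee := Real.sq_sqrt (by linarith)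
  have hgabs : ∀ ω, |g i ω| = τ * (Real.sqrt n)⁻¹ * |(w ω - (Real.sqrt n)⁻¹ * ∑ j, a j ω * (X ω j - Ξ ω j)) * a i ω| := by
    intro ω
    rw [hg]
    simp only [abs_mul, abs_of_nonneg hτ.le, abs_of_nonneg hrn.le]
    ring
  have hWa_bound : ∀ ω, |(w ω - (Real.sqrt n)⁻¹ * ∑ j, a j ω * (X ω j - Ξ ω j)) * a i ω| ≤ ((w ω - (Real.sqrt n)⁻¹ * ∑ j, a j ω * (X ω j - Ξ ω j)) ^ 2 / (Real.sqrt (1 + Ee)) + (Real.sqrt (1 + Ee)) * (a i ω) ^ 2) / 2 := by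
    intro ω
    rw [abs_mul, le_div_iff₀ (show (0:ℝ) < 2 by norm_num), div_add' _ _ _ hL0.ne',
      le_div_iff₀ hL0]
    nlinarith [sq_nonneg (|(w ω - (Real.sqrt n)⁻¹ * ∑ j, a j ω * (X ω j - Ξ ω j))| - (Real.sqrt (1 + Ee)) * |a i ω|), sq_abs ((w ω - (Real.sqrt n)⁻¹ * ∑ j, a j ω * (X ω j - Ξ ω j))), sq_abs (a i ω),
      abs_nonneg ((w ω - (Real.sqrt n)⁻¹ * ∑ j, a j ω * (X ω j - Ξ ω j))), abs_nonneg (a i ω), hL0]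
  have hRHS_int : Integrable (fun ω => ((w ω - (Real.sqrt n)⁻¹ * ∑ j, a j ω * (X ω j - Ξ ω j)) ^ 2 / (Real.sqrt (1 + Ee)) + (Real.sqrt (1 + Ee)) * (a i ω) ^ 2) / 2) μ :=
    ((hW2_int.div_const _).add ((ha_sq_int i).const_mul _)).div_const 2
  have hgi_abs_bound : ∫ ω, |g i ω| ∂μ
      ≤ τ * (Real.sqrt n)⁻¹ * (((2 * σ ^ 2 + 2 * Ee) / (Real.sqrt (1 + Ee)) + (Real.sqrt (1 + Ee))) / 2) := by
    have h1 : ∫ ω, |g i ω| ∂μ = τ * (Real.sqrt n)⁻¹ * ∫ ω, |(w ω - (Real.sqrt n)⁻¹ * ∑ j, a j ω * (X ω j - Ξ ω j)) * a i ω| ∂μ := by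
      rw [← integral_const_mul]
      exact integral_congr_ae (ae_of_all _ fun ω => hgabs ω)
    rw [h1]
    refine mul_le_mul_of_nonneg_left ?_ (by positivity)
    calc ∫ ω, |(w ω - (Real.sqrt n)⁻¹ * ∑ j, a j ω * (X ω j - Ξ ω j)) * a i ω| ∂μ
        ≤ ∫ ω, ((w ω - (Real.sqrt n)⁻¹ * ∑ j, a j ω * (X ω j - Ξ ω j)) ^ 2 / (Real.sqrt (1 + Ee)) + (Real.sqrt (1 + Ee)) * (a i ω) ^ 2) / 2 ∂μ :=
          integral_mono_of_nonneg (ae_of_all _ fun ω => abs_nonneg _) hRHS_int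
            (ae_of_all _ hWa_bound)
      _ = ((∫ ω, (w ω - (Real.sqrt n)⁻¹ * ∑ j, a j ω * (X ω j - Ξ ω j)) ^ 2 ∂μ) / (Real.sqrt (1 + Ee)) + (Real.sqrt (1 + Ee)) * 1) / 2 := by
          rw [integral_div, integral_add (hW2_int.div_const _) ((ha_sq_int i).const_mul _),
            integral_div, integral_const_mul, ha_sq i]
      _ ≤ ((2 * σ ^ 2 + 2 * Ee) / (Real.sqrt (1 + Ee)) + (Real.sqrt (1 + Ee))) / 2 := by
          have h2 : (∫ ω, (w ω - (Real.sqrt n)⁻¹ * ∑ j, a j ω * (X ω j - Ξ ω j)) ^ 2 ∂μ) / (Real.sqrt (1 + Ee)) ≤ (2 * σ ^ 2 + 2 * Ee) / (Real.sqrt (1 + Ee)) :=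
            (div_le_div_iff_of_pos_right hL0).mpr hW2_val
          linarith
  -- put the real estimates together
  have hCnn : (0 : ℝ) ≤ ((K : ℝ) + 1) * τ * (3 + 2 * σ ^ 2) :=
    mul_nonneg (mul_nonneg (by positivity) hτ.le) (by positivity)
  have hL1 : (2 * σ ^ 2 + 2 * Ee) / (Real.sqrt (1 + Ee)) ≤ (2 + 2 * σ ^ 2) * (Real.sqrt (1 + Ee)) := by
    rw [div_le_iff₀ hL0]
    nlinarith [hLsq, hEe0, sq_nonneg σ]
  have hreal : ∫ ω, |(μ[Δ i|MeasurableSpace.comap (fun ω : Ω => (X ω, Ξ ω)) inferInstance]) ω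
        - (n : ℝ)⁻¹ * (-(τ * (X ω i - Ξ ω i)) - φ (X ω i))| ∂μ
      ≤ ((K : ℝ) + 1) * τ * (3 + 2 * σ ^ 2) * (Real.sqrt (1 + Ee)) / ((n : ℝ) * Real.sqrt n) := by
    have step1 : ∫ ω, |(μ[Δ i|MeasurableSpace.comap (fun ω : Ω => (X ω, Ξ ω)) inferInstance]) ω
          - (n : ℝ)⁻¹ * (-(τ * (X ω i - Ξ ω i)) - φ (X ω i))| ∂μ
        ≤ (n : ℝ)⁻¹ * ((K : ℝ) * (τ * (Real.sqrt n)⁻¹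
            * (((2 * σ ^ 2 + 2 * Ee) / (Real.sqrt (1 + Ee)) + (Real.sqrt (1 + Ee))) / 2))) := by
      refine le_trans hkey ?_
      refine mul_le_mul_of_nonneg_left ?_ (inv_nonneg.mpr hnR.le)
      exact mul_le_mul_of_nonneg_left hgi_abs_bound (NNReal.coe_nonneg K)
    have step2 : (n : ℝ)⁻¹ * ((K : ℝ) * (τ * (Real.sqrt n)⁻¹
          * (((2 * σ ^ 2 + 2 * Ee) / (Real.sqrt (1 + Ee)) + (Real.sqrt (1 + Ee))) / 2)))
        ≤ (n : ℝ)⁻¹ * ((K : ℝ) * (τ * (Real.sqrt n)⁻¹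
          * ((3 + 2 * σ ^ 2) * (Real.sqrt (1 + Ee)) / 2))) := by
      have h4 : ((2 * σ ^ 2 + 2 * Ee) / (Real.sqrt (1 + Ee)) + (Real.sqrt (1 + Ee))) / 2
          ≤ (3 + 2 * σ ^ 2) * (Real.sqrt (1 + Ee)) / 2 := by
        nlinarith [hL1, hL0.le]
      refine mul_le_mul_of_nonneg_left ?_ (inv_nonneg.mpr hnR.le)
      refine mul_le_mul_of_nonneg_left ?_ (NNReal.coe_nonneg K)
      exact mul_le_mul_of_nonneg_left h4 (by positivity)
    have step3 : (n : ℝ)⁻¹ * ((K : ℝ) * (τ * (Real.sqrt n)⁻¹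
          * ((3 + 2 * σ ^ 2) * (Real.sqrt (1 + Ee)) / 2)))
        ≤ ((K : ℝ) + 1) * τ * (3 + 2 * σ ^ 2) * (Real.sqrt (1 + Ee)) / ((n : ℝ) * Real.sqrt n) := by
      have h2 : (n : ℝ)⁻¹ * ((K : ℝ) * (τ * (Real.sqrt n)⁻¹
            * ((3 + 2 * σ ^ 2) * (Real.sqrt (1 + Ee)) / 2)))
          = ((K : ℝ) * τ * (3 + 2 * σ ^ 2) / 2) * ((Real.sqrt (1 + Ee)) / ((n : ℝ) * Real.sqrt n)) := by
        field_simp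
      have h3 : ((K : ℝ) + 1) * τ * (3 + 2 * σ ^ 2) * (Real.sqrt (1 + Ee)) / ((n : ℝ) * Real.sqrt n)
          = (((K : ℝ) + 1) * τ * (3 + 2 * σ ^ 2)) * ((Real.sqrt (1 + Ee)) / ((n : ℝ) * Real.sqrt n)) := by
        ring
      rw [h2, h3]
      refine mul_le_mul_of_nonneg_right ?_ (by positivity)
      nlinarith [mul_nonneg hτ.le (by positivity : (0 : ℝ) ≤ 3 + 2 * σ ^ 2),
        mul_nonneg (mul_nonneg (NNReal.coe_nonneg K) hτ.le)
          (by positivity : (0 : ℝ) ≤ 3 + 2 * σ ^ 2)]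
    exact le_trans step1 (le_trans step2 step3)
  -- move to ℝ≥0∞
  have hEeq : ∫⁻ ω, ENNReal.ofReal (e ω) ∂μ = ENNReal.ofReal Ee :=
    (ofReal_integral_eq_lintegral_ofReal he_int (ae_of_all _ he_nonneg)).symm
  have hLHS : ∫⁻ ω, ENNReal.ofReal |(μ[Δ i|MeasurableSpace.comap (fun ω : Ω => (X ω, Ξ ω)) inferInstance]) ω
        - (n : ℝ)⁻¹ * (-(τ * (X ω i - Ξ ω i)) - φ (X ω i))| ∂μ
      = ENNReal.ofReal (∫ ω, |(μ[Δ i|MeasurableSpace.comap (fun ω : Ω => (X ω, Ξ ω)) inferInstance]) ω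
        - (n : ℝ)⁻¹ * (-(τ * (X ω i - Ξ ω i)) - φ (X ω i))| ∂μ) :=
    (ofReal_integral_eq_lintegral_ofReal hA_int.abs (ae_of_all _ fun ω => abs_nonneg _)).symm
  rw [hLHS, hEeq]
  have hofL : ENNReal.ofReal (Real.sqrt (1 + Ee)) = (1 + ENNReal.ofReal Ee) ^ ((1 : ℝ) / 2) := by
    rw [Real.sqrt_eq_rpow, ← ENNReal.ofReal_rpow_of_nonneg (by linarith) (by norm_num),
      ENNReal.ofReal_add zero_le_one hEe0, ENNReal.ofReal_one]
  have hofP : ENNReal.ofReal ((n : ℝ) * Real.sqrt n) = (n : ℝ≥0∞) ^ ((3 : ℝ) / 2) := by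
    have h1 : (n : ℝ) * Real.sqrt n = (n : ℝ) ^ ((3 : ℝ) / 2) := by
      rw [show (3 : ℝ) / 2 = 1 + 1 / 2 by norm_num, Real.rpow_add hnR, Real.rpow_one,
        ← Real.sqrt_eq_rpow]
    rw [h1, ← ENNReal.ofReal_rpow_of_nonneg hnR.le (by norm_num), ENNReal.ofReal_natCast]
  calc ENNReal.ofReal (∫ ω, |(μ[Δ i|MeasurableSpace.comap (fun ω : Ω => (X ω, Ξ ω)) inferInstance]) ω
        - (n : ℝ)⁻¹ * (-(τ * (X ω i - Ξ ω i)) - φ (X ω i))| ∂μ)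
      ≤ ENNReal.ofReal (((K : ℝ) + 1) * τ * (3 + 2 * σ ^ 2) * (Real.sqrt (1 + Ee))
          / ((n : ℝ) * Real.sqrt n)) := ENNReal.ofReal_le_ofReal hreal
    _ = ENNReal.ofReal (((K : ℝ) + 1) * τ * (3 + 2 * σ ^ 2)) * ENNReal.ofReal (Real.sqrt (1 + Ee))
          / ENNReal.ofReal ((n : ℝ) * Real.sqrt n) := by
        rw [ENNReal.ofReal_div_of_pos (mul_pos hnR hsn), ENNReal.ofReal_mul hCnn]
    _ = ENNReal.ofReal (((K : ℝ) + 1) * τ * (3 + 2 * σ ^ 2))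
          * (1 + ENNReal.ofReal Ee) ^ ((1 : ℝ) / 2) / (n : ℝ≥0∞) ^ ((3 : ℝ) / 2) := by
        rw [hofL, hofP]
    _ ≤ (ENNReal.ofReal (((K : ℝ) + 1) * τ * (3 + 2 * σ ^ 2)) + 1)
          * (1 + ENNReal.ofReal Ee) ^ ((1 : ℝ) / 2) / (n : ℝ≥0∞) ^ ((3 : ℝ) / 2) := by
        gcongr
        exact le_self_add
end
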